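/- For every real number t > 0, 1 - F(t) ≤ √(2/π) · exp(-(t + log t)/2), where F denotes the c.d.f. of the chi-square distribution with one degree of freedom. -/

import Mathlib

open Real Set MeasureTheory Filter

/-- Standard normal cumulative distribution function. -/
noncomputable def stdNormalCDF (x : ℝ) : ℝ :=
  ∫ u in Iic x, Real.exp (-u ^ 2 / 2) / Real.sqrt (2 * Real.pi)

/-- C.d.f. of the chi-square distribution with one degree of freedom. -/
noncomputable def chiSqOneCDF (x : ℝ) : ℝ := 2 * stdNormalCDF (Real.sqrt x) - 1

lemma gauss_fun_eq : (fun u : ℝ => Real.exp (-u ^ 2 / 2)) =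
    fun u : ℝ => Real.exp (-(1/2) * u ^ 2) := by
  funext u; ring_nf

lemma gauss_integrable : Integrable (fun u : ℝ => Real.exp (-u ^ 2 / 2)) := by
  rw [gauss_fun_eq]
  exact integrable_exp_neg_mul_sq (by norm_num)

lemma gauss_total : (∫ u : ℝ, Real.exp (-u ^ 2 / 2)) = Real.sqrt (2 * Real.pi) := by
  rw [gauss_fun_eq, integral_gaussian]
  rw [show (Real.pi / (1/2)) = 2 * Real.pi by ring]

lemma mul_gauss_integrable : Integrable (fun u : ℝ => u * Real.exp (-u ^ 2 / 2)) := by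
  have := integrable_mul_exp_neg_mul_sq (b := 1/2) (by norm_num)
  have heq : (fun u : ℝ => u * Real.exp (-u ^ 2 / 2)) =
      fun u : ℝ => u * Real.exp (-(1/2) * u ^ 2) := by funext u; ring_nf
  rw [heq]; exact this

lemma integral_mul_gauss_Ioi (x : ℝ) :
    (∫ u in Ioi x, u * Real.exp (-u ^ 2 / 2)) = Real.exp (-x ^ 2 / 2) := by
  have h : ∀ u ∈ Ioi x, HasDerivAt (fun u : ℝ => -Real.exp (-u ^ 2 / 2))
      (u * Real.exp (-u ^ 2 / 2)) u := by
    intro u _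
    have h1 : HasDerivAt (fun u : ℝ => -u ^ 2 / 2) (-u) u := by
      have : HasDerivAt (fun u : ℝ => -u ^ 2 / 2) (-(2 * u ^ 1) / 2) u :=
        ((hasDerivAt_pow 2 u).neg).div_const 2
      convert this using 1
      ring
    have : HasDerivAt (fun u : ℝ => -Real.exp (-u ^ 2 / 2)) (-(Real.exp (-u ^ 2 / 2) * -u)) u :=
      (h1.exp).neg
    convert this using 1
    ring_nf
  have htend : Tendsto (fun u : ℝ => -Real.exp (-u ^ 2 / 2)) atTop (nhds 0) := by
    rw [show (0:ℝ) = -0 by norm_num]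
    apply Tendsto.neg
    apply Real.tendsto_exp_atBot.comp
    have : Tendsto (fun u : ℝ => u ^ 2 / 2) atTop atTop :=
      (tendsto_pow_atTop (by norm_num)).atTop_div_const (by norm_num)
    simpa [neg_div] using (tendsto_neg_atBot_iff.mpr this)
  have := integral_Ioi_of_hasDerivAt_of_tendsto
    (f := fun u : ℝ => -Real.exp (-u ^ 2 / 2))
    (f' := fun u : ℝ => u * Real.exp (-u ^ 2 / 2))
    (Continuous.continuousWithinAt (by continuity)) h mul_gauss_integrable.integrableOn htend
  rw [this]; ring

lemma gauss_tail_bound {x : ℝ} (hx : 0 < x) :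
    (∫ u in Ioi x, Real.exp (-u ^ 2 / 2)) ≤ Real.exp (-x ^ 2 / 2) / x := by
  have hle : (∫ u in Ioi x, Real.exp (-u ^ 2 / 2)) ≤
      ∫ u in Ioi x, (1/x) * (u * Real.exp (-u ^ 2 / 2)) := by
    refine setIntegral_mono_on gauss_integrable.integrableOn
      ((mul_gauss_integrable.integrableOn).const_mul _) measurableSet_Ioi ?_
    intro u hu
    have hu : x < u := hu
    have h1 : (1:ℝ) ≤ u / x := (one_le_div hx).mpr hu.le
    have := mul_le_mul_of_nonneg_right h1 (Real.exp_nonneg (-u ^ 2 / 2))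
    calc Real.exp (-u ^ 2 / 2) = 1 * Real.exp (-u ^ 2 / 2) := by ring
      _ ≤ (u / x) * Real.exp (-u ^ 2 / 2) := this
      _ = (1/x) * (u * Real.exp (-u ^ 2 / 2)) := by ring
  rw [MeasureTheory.integral_const_mul, integral_mul_gauss_Ioi] at hle
  calc (∫ u in Ioi x, Real.exp (-u ^ 2 / 2)) ≤ 1/x * Real.exp (-x ^ 2 / 2) := hle
    _ = Real.exp (-x ^ 2 / 2) / x := by ring

theorem chiSqOneCDF_tail_bound (t : ℝ) (ht : 0 < t) :
    1 - chiSqOneCDF t ≤ Real.sqrt (2 / Real.pi) * Real.exp (-(t + Real.log t) / 2) := by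
  set x := Real.sqrt t with hxdef
  have hx : 0 < x := Real.sqrt_pos.mpr ht
  have hx2 : x ^ 2 = t := Real.sq_sqrt ht.le
  have hsplit : stdNormalCDF x + (∫ u in Ioi x, Real.exp (-u ^ 2 / 2) / Real.sqrt (2 * Real.pi)) = 1 := by
    unfold stdNormalCDF
    rw [intervalIntegral.integral_Iic_add_Ioi ((gauss_integrable.div_const _).integrableOn)
      ((gauss_integrable.div_const _).integrableOn)]
    have h2π : (0:ℝ) < Real.sqrt (2 * Real.pi) := Real.sqrt_pos.mpr (by positivity)
    rw [integral_div, gauss_total, div_self h2π.ne']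
  have key : 1 - chiSqOneCDF t =
      2 * ∫ u in Ioi x, Real.exp (-u ^ 2 / 2) / Real.sqrt (2 * Real.pi) := by
    unfold chiSqOneCDF
    rw [← hxdef]
    linarith
  rw [key, integral_div]
  have hbound := gauss_tail_bound hx
  have h2π : (0:ℝ) < Real.sqrt (2 * Real.pi) := Real.sqrt_pos.mpr (by positivity)
  have hle : 2 * ((∫ u in Ioi x, Real.exp (-u ^ 2 / 2)) / Real.sqrt (2 * Real.pi)) ≤
      2 * (Real.exp (-x ^ 2 / 2) / x / Real.sqrt (2 * Real.pi)) := by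
    gcongr
  refine hle.trans (le_of_eq ?_)
  -- RHS computation
  have hexp : Real.exp (-(t + Real.log t) / 2) = Real.exp (-t / 2) / x := by
    rw [show (-(t + Real.log t) / 2) = -t/2 + (-(1/2)) * Real.log t by ring,
      Real.exp_add, mul_comm (-(1/2)) (Real.log t), Real.exp_mul, Real.exp_log ht]
    rw [hxdef, Real.sqrt_eq_rpow, Real.rpow_neg ht.le, div_eq_mul_inv]
    ring
  rw [hexp, hx2]
  have hs : Real.sqrt (2 / Real.pi) = 2 / Real.sqrt (2 * Real.pi) := by
    rw [eq_div_iff h2π.ne', ← Real.sqrt_mul (by positivity)]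
    rw [show (2 / Real.pi * (2 * Real.pi)) = 4 by field_simp; ring]
    rw [show (4:ℝ) = 2^2 by norm_num, Real.sqrt_sq (by norm_num)]
  rw [hs]
  ring
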